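/- Let E be a finite-dimensional real inner product space, ν a norm on E, x ∈ E, c ∈ ℝ, and let a := sup{⟨x,u⟩ : u ∈ E, ν(u) ≤ 1} be the dual norm of x. Suppose η > a². Then sup_{q∈E} [(⟨x,q⟩ + c)² − η·ν(q)²] = η·c²/(η − a²). Moreover, if q̄ ∈ E satisfies ν(q̄) ≤ 1 and ⟨x,q̄⟩ = a, then the supremum is attained at q* := (a·c/(η − a²))·q̄. -/

import Mathlib

/-- Lemma 6.3(ii-b) (bounded case, `m = 2`): for a norm `ν` on a finite-dimensional real
inner product space, with `a = ν*(x)` the dual norm of `x` and `η > a²`,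
`sup_q [(⟨x,q⟩ + c)² − η·ν(q)²] = η·c²/(η − a²)`, attained at
`q* = (a·c/(η − a²))·q̄` whenever `ν(q̄) ≤ 1` and `⟨x,q̄⟩ = a`. -/
theorem perturbation_problem_bounded {E : Type*} [NormedAddCommGroup E]
    [InnerProductSpace ℝ E] [FiniteDimensional ℝ E]
    (ν : E → ℝ)
    (hν_add : ∀ u v, ν (u + v) ≤ ν u + ν v)
    (hν_smul : ∀ (a : ℝ) (u : E), ν (a • u) = |a| * ν u)
    (hν_eq : ∀ u, ν u = 0 ↔ u = 0)
    (x : E) (c η a : ℝ)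
    (ha : a = sSup ((fun u => (inner ℝ x u : ℝ)) '' {u | ν u ≤ 1}))
    (hη : a ^ 2 < η) :
    sSup (Set.range fun q : E => ((inner ℝ x q : ℝ) + c) ^ 2 - η * ν q ^ 2) =
      η * c ^ 2 / (η - a ^ 2) ∧
    ∀ qbar : E, ν qbar ≤ 1 → (inner ℝ x qbar : ℝ) = a →
      ((inner ℝ x ((a * c / (η - a ^ 2)) • qbar) : ℝ) + c) ^ 2 -
          η * ν ((a * c / (η - a ^ 2)) • qbar) ^ 2 =
        η * c ^ 2 / (η - a ^ 2) := by
  have hν0 : ν 0 = 0 := (hν_eq 0).mpr rfl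
  have hνneg : ∀ u : E, ν (-u) = ν u := by
    intro u
    have := hν_smul (-1) u
    simpa using this
  have hνnn : ∀ u : E, 0 ≤ ν u := by
    intro u
    have h := hν_add u (-u)
    rw [add_neg_cancel, hν0, hνneg] at h
    linarith
  -- ν is bounded by a multiple of the ambient norm
  obtain ⟨C, hC0, hC⟩ : ∃ C, 0 ≤ C ∧ ∀ w : E, ν w ≤ C * ‖w‖ := by
    classical
    set b := Module.finBasis ℝ E with hb
    have hsum : ∀ (s : Finset (Fin (Module.finrank ℝ E))) (f : Fin (Module.finrank ℝ E) → E),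
        ν (∑ i ∈ s, f i) ≤ ∑ i ∈ s, ν (f i) := by
      intro s f
      induction s using Finset.induction with
      | empty => simp [hν0]
      | @insert _ _ hni ih =>
        rw [Finset.sum_insert hni, Finset.sum_insert hni]
        exact le_trans (hν_add _ _) (by linarith)
    set K : Fin (Module.finrank ℝ E) → ℝ :=
      fun i => ‖LinearMap.toContinuousLinearMap (b.coord i)‖
    refine ⟨∑ i, K i * ν (b i), Finset.sum_nonneg fun i _ =>
      mul_nonneg (norm_nonneg _) (hνnn _), fun w => ?_⟩
    have hw : w = ∑ i, b.repr w i • b i := (b.sum_repr w).symm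
    calc ν w = ν (∑ i, b.repr w i • b i) := by rw [← hw]
      _ ≤ ∑ i, ν (b.repr w i • b i) := hsum _ _
      _ ≤ ∑ i, (K i * ν (b i)) * ‖w‖ := by
          refine Finset.sum_le_sum fun i _ => ?_
          rw [hν_smul]
          have h1 : |b.repr w i| ≤ K i * ‖w‖ := by
            have := (LinearMap.toContinuousLinearMap (b.coord i)).le_opNorm w
            simpa [Real.norm_eq_abs] using this
          have := mul_le_mul_of_nonneg_right h1 (hνnn (b i))
          nlinarith [hνnn (b i)]
      _ = (∑ i, K i * ν (b i)) * ‖w‖ := by rw [Finset.sum_mul]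
  -- ν is continuous
  have hcont : Continuous ν := by
    have hlip : ∀ u v : E, ν u - ν v ≤ ν (u - v) := by
      intro u v
      have := hν_add (u - v) v
      rw [sub_add_cancel] at this
      linarith
    refine (LipschitzWith.of_dist_le_mul (K := C.toNNReal) fun u v => ?_).continuous
    rw [Real.dist_eq, dist_eq_norm, Real.coe_toNNReal C hC0]
    rw [abs_sub_le_iff]
    constructor
    · exact le_trans (hlip u v) (hC _)
    · refine le_trans (hlip v u) (le_trans (hC _) ?_)
      rw [norm_sub_rev]
  -- the unit ball of ν is compact
  have hScomp : IsCompact {u : E | ν u ≤ 1} := by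
    rcases subsingleton_or_nontrivial E with hs | hs
    · have : {u : E | ν u ≤ 1} = {0} := by
        ext u
        simp [Subsingleton.elim u 0, hν0, zero_le_one]
      rw [this]; exact isCompact_singleton
    · -- lower bound for ν on the sphere
      obtain ⟨u₀, hu₀s, hu₀min⟩ := (isCompact_sphere (0 : E) 1).exists_isMinOn
        (NormedSpace.sphere_nonempty.mpr zero_le_one) hcont.continuousOn
      have hu₀ : u₀ ≠ 0 := by
        intro h
        rw [mem_sphere_iff_norm, h, sub_zero, norm_zero] at hu₀s
        exact one_ne_zero hu₀s.symm
      set m := ν u₀ with hm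
      have hm0 : 0 < m := lt_of_le_of_ne (hνnn u₀) fun h => hu₀ ((hν_eq u₀).mp h.symm)
      have hlow : ∀ u : E, m * ‖u‖ ≤ ν u := by
        intro u
        rcases eq_or_ne u 0 with rfl | hu
        · simp [hν0]
        · have hnu : (0 : ℝ) < ‖u‖ := norm_pos_iff.mpr hu
          have hmem : ‖u‖⁻¹ • u ∈ Metric.sphere (0 : E) 1 := by
            simp [norm_smul, abs_of_pos (inv_pos.mpr hnu), inv_mul_cancel₀ hnu.ne']
          have := hu₀min hmem
          simp only [Set.mem_setOf_eq] at this
          rw [hν_smul, abs_of_pos (inv_pos.mpr hnu)] at this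
          calc m * ‖u‖ ≤ (‖u‖⁻¹ * ν u) * ‖u‖ :=
                mul_le_mul_of_nonneg_right this hnu.le
            _ = ν u := by field_simp
      refine Metric.isCompact_of_isClosed_isBounded
        (isClosed_Iic.preimage hcont) (Metric.isBounded_closedBall (x := (0:E)) (r := m⁻¹) |>.subset ?_)
      intro u hu
      simp only [Set.mem_setOf_eq] at hu
      rw [Metric.mem_closedBall, dist_zero_right]
      have := hlow u
      rw [← le_div_iff₀' hm0] at this
      calc ‖u‖ ≤ ν u / m := this
        _ ≤ m⁻¹ := by rw [div_eq_mul_inv]; nlinarith [inv_pos.mpr hm0]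
  -- the dual norm is attained
  have hSne : Set.Nonempty {u : E | ν u ≤ 1} := ⟨0, by simp [hν0]⟩
  have hic : Continuous fun u : E => (inner ℝ x u : ℝ) := continuous_const.inner continuous_id
  obtain ⟨u₀, hu₀S, hu₀max⟩ := hScomp.exists_isMaxOn hSne hic.continuousOn
  have hbdd : BddAbove ((fun u => (inner ℝ x u : ℝ)) '' {u | ν u ≤ 1}) := by
    refine ⟨(inner ℝ x u₀ : ℝ), ?_⟩
    rintro y ⟨u, hu, rfl⟩
    exact hu₀max hu
  have ha_eq : (inner ℝ x u₀ : ℝ) = a := by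
    rw [ha]
    refine le_antisymm (le_csSup hbdd ⟨u₀, hu₀S, rfl⟩) ?_
    exact csSup_le (hSne.image _) (by rintro y ⟨u, hu, rfl⟩; exact hu₀max hu)
  have ha_ub : ∀ u : E, ν u ≤ 1 → (inner ℝ x u : ℝ) ≤ a := by
    intro u hu
    rw [ha]
    exact le_csSup hbdd ⟨u, hu, rfl⟩
  have ha0 : 0 ≤ a := by
    have := ha_ub 0 (by simp [hν0])
    simpa using this
  -- key inequality
  have hkey : ∀ u : E, (inner ℝ x u : ℝ) ≤ a * ν u := by
    intro u
    rcases eq_or_lt_of_le (hνnn u) with h | h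
    · rw [(hν_eq u).mp h.symm]
      simp [hν0]
    · have hmem : ν ((ν u)⁻¹ • u) ≤ 1 := by
        rw [hν_smul, abs_of_pos (inv_pos.mpr h), inv_mul_cancel₀ h.ne']
      have := ha_ub _ hmem
      rw [real_inner_smul_right] at this
      calc (inner ℝ x u : ℝ) = ν u * ((ν u)⁻¹ * (inner ℝ x u : ℝ)) := by field_simp
        _ ≤ ν u * a := mul_le_mul_of_nonneg_left this h.le
        _ = a * ν u := mul_comm _ _
  have hηa : (0 : ℝ) < η - a ^ 2 := by linarith
  -- upper bound
  have hub : ∀ q : E, ((inner ℝ x q : ℝ) + c) ^ 2 - η * ν q ^ 2 ≤ η * c ^ 2 / (η - a ^ 2) := by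
    intro q
    set s := (inner ℝ x q : ℝ)
    set t := ν q
    have hs1 : s ≤ a * t := hkey q
    have hs2 : -s ≤ a * t := by
      have := hkey (-q)
      rw [inner_neg_right, hνneg] at this
      simpa using this
    have ht : 0 ≤ t := hνnn q
    rw [le_div_iff₀ hηa]
    have h1 : 0 ≤ (η - a ^ 2) * ((a * t - s) * (a * t + s)) :=
      mul_nonneg hηa.le (mul_nonneg (by linarith) (by linarith))
    rcases le_or_gt 0 c with hc | hc
    · have h2 : 0 ≤ (η - a ^ 2) * ((a * t - s) * c) :=
        mul_nonneg hηa.le (mul_nonneg (by linarith) hc)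
      nlinarith [sq_nonneg ((η - a ^ 2) * t - a * c)]
    · have h2 : 0 ≤ (η - a ^ 2) * ((a * t + s) * (-c)) :=
        mul_nonneg hηa.le (mul_nonneg (by linarith) (by linarith))
      nlinarith [sq_nonneg ((η - a ^ 2) * t + a * c)]
  -- attainment part
  have hatt : ∀ qbar : E, ν qbar ≤ 1 → (inner ℝ x qbar : ℝ) = a →
      ((inner ℝ x ((a * c / (η - a ^ 2)) • qbar) : ℝ) + c) ^ 2 -
          η * ν ((a * c / (η - a ^ 2)) • qbar) ^ 2 = η * c ^ 2 / (η - a ^ 2) := by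
    intro qbar hq1 hq2
    rcases eq_or_ne (a * c) 0 with hac | hac
    · rw [hac, zero_div, zero_smul, inner_zero_right, hν0]
      rcases mul_eq_zero.mp hac with h | h
      · rw [h] at hη ⊢
        have hη0 : (0:ℝ) < η := by nlinarith
        field_simp
        norm_num [hη0.ne']
      · rw [h]
        simp
    · have ha' : 0 < a := lt_of_le_of_ne ha0 fun h => hac (by rw [← h]; ring)
      have hqn : ν qbar = 1 := by
        have := hkey qbar
        rw [hq2] at this
        nlinarith
      rw [real_inner_smul_right, hq2, hν_smul, hqn, mul_one, sq_abs]
      field_simp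
      ring
  refine ⟨le_antisymm ?_ ?_, hatt⟩
  · exact csSup_le (Set.range_nonempty _) (by rintro y ⟨q, rfl⟩; exact hub q)
  · have := hatt u₀ hu₀S ha_eq
    rw [← this]
    exact le_csSup ⟨η * c ^ 2 / (η - a ^ 2), by rintro y ⟨q, rfl⟩; exact hub q⟩
      ⟨(a * c / (η - a ^ 2)) • u₀, rfl⟩
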